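/- For every λ ∈ [0,1] and every complex 2×2 matrix ρ, the unbiased von Neumann–Lüders update over the two measurement settings {E_{x(+)}, E_{x(−)}} and {E_{z(+)}, E_{z(−)}} equals the channel Φ_λ: (1/2)[√E_{x(+)} ρ √E_{x(+)} + √E_{x(−)} ρ √E_{x(−)}] + (1/2)[√E_{z(+)} ρ √E_{z(+)} + √E_{z(−)} ρ √E_{z(−)}] = ((2+√(1−λ²))/4)·ρ + (1/4)·σ_z ρ σ_z + ((1−√(1−λ²))/4)·σ_x ρ σ_x. -/

import Mathlib

open Matrix
open scoped ComplexOrder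

noncomputable section

/-- The positive semidefinite square root of a positive semidefinite matrix
(restored with its former Mathlib definition, removed since). -/
def Matrix.PosSemidef.sqrt {n 𝕜 : Type*} [Fintype n] [RCLike 𝕜] [DecidableEq n]
    {A : Matrix n n 𝕜} (hA : A.PosSemidef) : Matrix n n 𝕜 :=
  hA.1.eigenvectorUnitary.1 * diagonal ((↑) ∘ (√·) ∘ hA.1.eigenvalues) *
  (star hA.1.eigenvectorUnitary : Matrix n n 𝕜)

/-- The Pauli matrix σ_x. -/
def sigx : Matrix (Fin 2) (Fin 2) ℂ := !![0, 1; 1, 0]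

/-- The Pauli matrix σ_z. -/
def sigz : Matrix (Fin 2) (Fin 2) ℂ := !![1, 0; 0, -1]

/-- The unsharp effect `E_{x(+)} = (I + λσ_x)/2`. -/
def effectXPlus (lam : ℝ) : Matrix (Fin 2) (Fin 2) ℂ :=
  (1/2 : ℂ) • ((1 : Matrix (Fin 2) (Fin 2) ℂ) + (lam : ℂ) • sigx)

/-- The unsharp effect `E_{x(−)} = (I − λσ_x)/2`. -/
def effectXMinus (lam : ℝ) : Matrix (Fin 2) (Fin 2) ℂ :=
  (1/2 : ℂ) • ((1 : Matrix (Fin 2) (Fin 2) ℂ) - (lam : ℂ) • sigx)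

/-- The sharp effect `E_{z(+)} = (I + σ_z)/2`. -/
def effectZPlus : Matrix (Fin 2) (Fin 2) ℂ :=
  (1/2 : ℂ) • ((1 : Matrix (Fin 2) (Fin 2) ℂ) + sigz)

/-- The sharp effect `E_{z(−)} = (I − σ_z)/2`. -/
def effectZMinus : Matrix (Fin 2) (Fin 2) ℂ :=
  (1/2 : ℂ) • ((1 : Matrix (Fin 2) (Fin 2) ℂ) - sigz)

/-- The single-qubit map
`Φ_λ(ρ) = ((2+√(1−λ²))/4)ρ + (1/4)σ_z ρ σ_z + ((1−√(1−λ²))/4)σ_x ρ σ_x`. -/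
def phi (lam : ℝ) (ρ : Matrix (Fin 2) (Fin 2) ℂ) : Matrix (Fin 2) (Fin 2) ℂ :=
  (((2 + Real.sqrt (1 - lam ^ 2)) / 4 : ℝ) : ℂ) • ρ
    + (1/4 : ℂ) • (sigz * ρ * sigz)
    + (((1 - Real.sqrt (1 - lam ^ 2)) / 4 : ℝ) : ℂ) • (sigx * ρ * sigx)

theorem Matrix.PosSemidef.eq_sqrt_of_sq_eq {n 𝕜 : Type*} [Fintype n] [RCLike 𝕜] [DecidableEq n]
    {B : Matrix n n 𝕜} (hB : B.PosSemidef) {A : Matrix n n 𝕜} (hA : A.PosSemidef)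
    (h : B ^ 2 = A) : B = hA.sqrt := by
  have e : hA.sqrt = cfc Real.sqrt A := by
    rw [hA.1.cfc_eq]
    simp [IsHermitian.cfc, Matrix.PosSemidef.sqrt, Unitary.conjStarAlgAut_apply]
  have hBs : IsSelfAdjoint B := hB.1
  rw [e, ← h, ← cfc_comp_pow (f := Real.sqrt) (n := 2) B
    (hf := Real.continuous_sqrt.continuousOn) (ha := hBs)]
  refine ((cfc_congr fun x hx => ?_).trans (cfc_id' ℝ B (ha := hBs))).symm
  · have : 0 ≤ x := by
      rw [hB.1.spectrum_real_eq_range_eigenvalues] at hx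
      obtain ⟨i, rfl⟩ := hx
      exact hB.eigenvalues_nonneg i
    simp [Real.sqrt_sq this]

set_option maxHeartbeats 1000000 in
/-- For every `λ ∈ [0,1]` and every complex 2×2 matrix `ρ`, the
unbiased von Neumann–Lüders update over the two measurement settings
`{E_{x(+)}, E_{x(−)}}` and `{E_{z(+)}, E_{z(−)}}` equals the channel `Φ_λ`. -/
theorem luders_update_eq_phi
    (lam : ℝ) (hlam : lam ∈ Set.Icc (0 : ℝ) 1)
    (hxp : (effectXPlus lam).PosSemidef) (hxm : (effectXMinus lam).PosSemidef)
    (hzp : effectZPlus.PosSemidef) (hzm : effectZMinus.PosSemidef)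
    (ρ : Matrix (Fin 2) (Fin 2) ℂ) :
    (1/2 : ℂ) • (hxp.sqrt * ρ * hxp.sqrt + hxm.sqrt * ρ * hxm.sqrt)
      + (1/2 : ℂ) • (hzp.sqrt * ρ * hzp.sqrt + hzm.sqrt * ρ * hzm.sqrt)
      = phi lam ρ := by
  obtain ⟨h0, h1⟩ := hlam
  set r := Real.sqrt (1 - lam ^ 2) with hr
  set s := Real.sqrt ((1 + lam) / 2) with hs
  set t := Real.sqrt ((1 - lam) / 2) with ht
  have hs0 : 0 ≤ s := Real.sqrt_nonneg _
  have ht0 : 0 ≤ t := Real.sqrt_nonneg _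
  have hs2 : s ^ 2 = (1 + lam) / 2 := Real.sq_sqrt (by linarith)
  have ht2 : t ^ 2 = (1 - lam) / 2 := Real.sq_sqrt (by linarith)
  have hst : s * t = r / 2 := by
    rw [hs, ht, ← Real.sqrt_mul (by linarith),
      show (1 + lam) / 2 * ((1 - lam) / 2) = (1 - lam ^ 2) * (1/2) ^ 2 by ring,
      Real.sqrt_mul (by nlinarith), Real.sqrt_sq (by norm_num), hr]
    ring
  have hs2c : (s : ℂ) ^ 2 = (1 + (lam : ℂ)) / 2 := by exact_mod_cast hs2
  have ht2c : (t : ℂ) ^ 2 = (1 - (lam : ℂ)) / 2 := by exact_mod_cast ht2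
  have hstc : (s : ℂ) * (t : ℂ) = (r : ℂ) / 2 := by exact_mod_cast hst
  set p := Real.sqrt (s / 2) with hp
  set q := Real.sqrt (t / 2) with hq
  have hpc : (p : ℂ) * (p : ℂ) = (s : ℂ) / 2 := by
    exact_mod_cast Real.mul_self_sqrt (by positivity : (0:ℝ) ≤ s / 2)
  have hqc : (q : ℂ) * (q : ℂ) = (t : ℂ) / 2 := by
    exact_mod_cast Real.mul_self_sqrt (by positivity : (0:ℝ) ≤ t / 2)
  have hpc2 : (p : ℂ) ^ 2 = (s : ℂ) / 2 := by rw [sq]; exact hpc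
  have hqc2 : (q : ℂ) ^ 2 = (t : ℂ) / 2 := by rw [sq]; exact hqc
  have hstc2 : (t : ℂ) * (s : ℂ) = (r : ℂ) / 2 := by rw [mul_comm]; exact hstc
  set Cp : Matrix (Fin 2) (Fin 2) ℂ :=
    !![((s:ℂ)+t)/2, ((s:ℂ)-t)/2; ((s:ℂ)-t)/2, ((s:ℂ)+t)/2] with hCp
  set Cm : Matrix (Fin 2) (Fin 2) ℂ :=
    !![((s:ℂ)+t)/2, ((t:ℂ)-s)/2; ((t:ℂ)-s)/2, ((s:ℂ)+t)/2] with hCm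
  have hBp : Cp = (!![(p:ℂ), (p:ℂ); (q:ℂ), -(q:ℂ)])ᴴ * !![(p:ℂ), (p:ℂ); (q:ℂ), -(q:ℂ)] := by
    ext i j
    fin_cases i <;> fin_cases j <;>
      simp [hCp, Matrix.mul_apply, Fin.sum_univ_two, Matrix.conjTranspose_apply,
        Complex.star_def, Complex.conj_ofReal] <;>
      · ring_nf; simp only [hpc2, hqc2, hs2c, ht2c, hstc, hstc2]; ring
  have hBm : Cm = (!![(p:ℂ), -(p:ℂ); (q:ℂ), (q:ℂ)])ᴴ * !![(p:ℂ), -(p:ℂ); (q:ℂ), (q:ℂ)] := by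
    ext i j
    fin_cases i <;> fin_cases j <;>
      simp [hCm, Matrix.mul_apply, Fin.sum_univ_two, Matrix.conjTranspose_apply,
        Complex.star_def, Complex.conj_ofReal] <;>
      · ring_nf; simp only [hpc2, hqc2, hs2c, ht2c, hstc, hstc2]; ring
  have hCpPSD : Cp.PosSemidef := by
    rw [hBp]; exact posSemidef_conjTranspose_mul_self _
  have hCmPSD : Cm.PosSemidef := by
    rw [hBm]; exact posSemidef_conjTranspose_mul_self _
  have hCpsq : Cp ^ 2 = effectXPlus lam := by
    ext i j
    fin_cases i <;> fin_cases j <;>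
      simp [hCp, pow_two, Matrix.mul_apply, Fin.sum_univ_two, effectXPlus, sigx,
        Matrix.one_apply, Matrix.smul_apply, Matrix.add_apply] <;>
      · ring_nf; simp only [hpc2, hqc2, hs2c, ht2c, hstc, hstc2]; ring
  have hCmsq : Cm ^ 2 = effectXMinus lam := by
    ext i j
    fin_cases i <;> fin_cases j <;>
      simp [hCm, pow_two, Matrix.mul_apply, Fin.sum_univ_two, effectXMinus, sigx,
        Matrix.one_apply, Matrix.smul_apply, Matrix.sub_apply, Matrix.add_apply] <;>
      · ring_nf; simp only [hpc2, hqc2, hs2c, ht2c, hstc, hstc2]; ring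
  have hsqxp : hxp.sqrt = Cp := (hCpPSD.eq_sqrt_of_sq_eq hxp hCpsq).symm
  have hsqxm : hxm.sqrt = Cm := (hCmPSD.eq_sqrt_of_sq_eq hxm hCmsq).symm
  have hZPsq : effectZPlus ^ 2 = effectZPlus := by
    ext i j
    fin_cases i <;> fin_cases j <;>
      simp [pow_two, Matrix.mul_apply, Fin.sum_univ_two, effectZPlus, sigz,
        Matrix.one_apply, Matrix.smul_apply, Matrix.add_apply] <;> ring_nf <;> norm_num
  have hZMsq : effectZMinus ^ 2 = effectZMinus := by
    ext i j
    fin_cases i <;> fin_cases j <;>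
      simp [pow_two, Matrix.mul_apply, Fin.sum_univ_two, effectZMinus, sigz,
        Matrix.one_apply, Matrix.smul_apply, Matrix.sub_apply] <;> ring_nf <;> norm_num
  have hsqzp : hzp.sqrt = effectZPlus := (hzp.eq_sqrt_of_sq_eq hzp hZPsq).symm
  have hsqzm : hzm.sqrt = effectZMinus := (hzm.eq_sqrt_of_sq_eq hzm hZMsq).symm
  rw [hsqxp, hsqxm, hsqzp, hsqzm]
  ext i j
  fin_cases i <;> fin_cases j
  · simp [hCp, hCm, phi, effectZPlus, effectZMinus, sigx, sigz, Matrix.mul_apply,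
        Fin.sum_univ_two, Matrix.add_apply, Matrix.smul_apply, Matrix.one_apply,
        Matrix.sub_apply, Matrix.vecMul, dotProduct]
    push_cast
    ring_nf
    simp only [hpc2, hqc2, hs2c, ht2c, hstc, hstc2]
    ring
  · simp [hCp, hCm, phi, effectZPlus, effectZMinus, sigx, sigz, Matrix.mul_apply,
        Fin.sum_univ_two, Matrix.add_apply, Matrix.smul_apply, Matrix.one_apply,
        Matrix.sub_apply, Matrix.vecMul, dotProduct]
    push_cast
    ring_nf
    simp only [hpc2, hqc2, hs2c, ht2c, hstc, hstc2]
    ring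
  · simp [hCp, hCm, phi, effectZPlus, effectZMinus, sigx, sigz, Matrix.mul_apply,
        Fin.sum_univ_two, Matrix.add_apply, Matrix.smul_apply, Matrix.one_apply,
        Matrix.sub_apply, Matrix.vecMul, dotProduct]
    push_cast
    ring_nf
    simp only [hpc2, hqc2, hs2c, ht2c, hstc, hstc2]
    ring
  · simp [hCp, hCm, phi, effectZPlus, effectZMinus, sigx, sigz, Matrix.mul_apply,
        Fin.sum_univ_two, Matrix.add_apply, Matrix.smul_apply, Matrix.one_apply,
        Matrix.sub_apply, Matrix.vecMul, dotProduct]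
    push_cast
    ring_nf
    simp only [hpc2, hqc2, hs2c, ht2c, hstc, hstc2]
    ring

end
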